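/- arXiv:2102.02244 — 3 statements merged into one kernel-verified Lean document; each statement's English description precedes it below -/
import Mathlib

section
/- (Simplified sphere-packing bound) For any 𝔽_{q^m}-linear [n,k,d] sum-rank-metric code, q^{mk} · q^{(m+η-⌊(d-1)/2⌋/ℓ)·⌊(d-1)/2⌋ - ℓ/4} · γ_q^{-ℓ} ≤ q^{mn}. -/
/-- `γ_q = ∏_{i=1}^∞ (1 - q^{-i})^{-1}`. -/
noncomputable def gammaq (q : ℕ) : ℝ := ∏' i : ℕ, (1 - (q : ℝ)⁻¹ ^ (i + 1))⁻¹

/-- Rank weight of a block `v ∈ Fqm^η`: the `Fq`-dimension of the span of its entries. -/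
noncomputable def rkw (Fq : Type) {Fqm : Type} [Field Fq] [Field Fqm] [Algebra Fq Fqm]
    {η : ℕ} (v : Fin η → Fqm) : ℕ :=
  Module.finrank Fq (Submodule.span Fq (Set.range v))

/-- Sum-rank weight of a vector in `Fqm^(ℓη)`, given as `ℓ` blocks of length `η`. -/
noncomputable def srw (Fq : Type) {Fqm : Type} [Field Fq] [Field Fqm] [Algebra Fq Fqm]
    {ℓ η : ℕ} (x : Fin ℓ → Fin η → Fqm) : ℕ :=
  ∑ i, rkw Fq (x i)

/-- Number of vectors in `Fqm^(ℓη)` of sum-rank weight exactly `t`. -/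
noncomputable def VolS (Fq Fqm : Type) [Field Fq] [Field Fqm] [Algebra Fq Fqm]
    (ℓ η t : ℕ) : ℕ :=
  Nat.card {x : Fin ℓ → Fin η → Fqm // srw Fq x = t}

/-- Number of vectors in `Fqm^(ℓη)` of sum-rank weight at most `t`. -/
noncomputable def VolB (Fq Fqm : Type) [Field Fq] [Field Fqm] [Algebra Fq Fqm]
    (ℓ η t : ℕ) : ℕ :=
  Nat.card {x : Fin ℓ → Fin η → Fqm // srw Fq x ≤ t}



section Gamma
variable {q : ℕ} (hq : 2 ≤ q)
include hq

private lemma gx_bound (i : ℕ) : 0 < (q:ℝ)⁻¹ ^ (i+1) ∧ (q:ℝ)⁻¹ ^ (i+1) ≤ 2⁻¹ := by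
  have hq2 : (2:ℝ) ≤ q := by exact_mod_cast hq
  have h0 : (0:ℝ) < (q:ℝ)⁻¹ := by positivity
  have h1 : (q:ℝ)⁻¹ ≤ 2⁻¹ := by
    rw [inv_le_inv₀ (by linarith) (by norm_num)]; exact hq2
  constructor
  · positivity
  · calc (q:ℝ)⁻¹ ^ (i+1) ≤ (q:ℝ)⁻¹ ^ 1 := by
          apply pow_le_pow_of_le_one (le_of_lt h0) (by linarith) (by omega)
        _ ≤ 2⁻¹ := by simpa using h1

private lemma gfac_pos (i : ℕ) : (2:ℝ)⁻¹ ≤ 1 - (q:ℝ)⁻¹ ^ (i+1) := by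
  have := gx_bound hq i; linarith [this.1, this.2]

private lemma gfac_one_le (i : ℕ) : 1 ≤ (1 - (q:ℝ)⁻¹ ^ (i+1))⁻¹ := by
  have h := gfac_pos hq i
  have h2 := (gx_bound hq i).1
  rw [le_inv_comm₀ one_pos (by linarith)]
  linarith

lemma gamma_multipliable : Multipliable (fun i : ℕ => (1 - (q:ℝ)⁻¹ ^ (i+1))⁻¹) := by
  have hpos : ∀ (_ : Unit) (i : ℕ), 0 < (fun i (_ : Unit) => (1 - (q:ℝ)⁻¹ ^ (i+1))⁻¹) i () := by
    intro _ i
    have := gfac_pos hq i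
    simp only []
    positivity
  have hsum : ∀ (_ : Unit), Summable fun i : ℕ =>
      Real.log ((1 - (q:ℝ)⁻¹ ^ (i+1))⁻¹) := by
    intro _
    have hgeo : Summable (fun i : ℕ => 2 * (q:ℝ)⁻¹ ^ (i+1)) := by
      have h0 : (0:ℝ) ≤ (q:ℝ)⁻¹ := by positivity
      have h1 : (q:ℝ)⁻¹ < 1 := by
        have := gx_bound hq 0; simp at this; nlinarith [this.2]
      have := (summable_geometric_of_lt_one h0 h1).mul_left (2 * (q:ℝ)⁻¹)
      apply this.congr
      intro i; ring
    apply Summable.of_nonneg_of_le _ _ hgeo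
    · intro i
      exact Real.log_nonneg (gfac_one_le hq i)
    · intro i
      have hp := gfac_pos hq i
      have hx := gx_bound hq i
      have hinv : (1 - (q:ℝ)⁻¹ ^ (i+1))⁻¹ ≤ 2 := by
        rw [inv_le_comm₀ (by linarith) (by norm_num)]
        linarith
      calc Real.log ((1 - (q:ℝ)⁻¹ ^ (i+1))⁻¹)
          ≤ (1 - (q:ℝ)⁻¹ ^ (i+1))⁻¹ - 1 := Real.log_le_sub_one_of_pos (by positivity)
        _ ≤ 2 * (q:ℝ)⁻¹ ^ (i+1) := by
            set x := (q:ℝ)⁻¹ ^ (i+1) with hxdef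
            set y := (1 - x)⁻¹ with hydef
            have hy : (1 - x) * y = 1 := mul_inv_cancel₀ (by linarith)
            nlinarith [mul_nonneg (le_of_lt hx.1) (by linarith : (0:ℝ) ≤ 2 - y)]
  exact Real.multipliable_of_summable_log (fun i => hpos () i) (hsum ())


lemma gamma_partial_le (s : Finset ℕ) :
    ∏ i ∈ s, (1 - (q:ℝ)⁻¹ ^ (i+1))⁻¹ ≤ gammaq q := by
  have hp : HasProd (fun i : ℕ => (1 - (q:ℝ)⁻¹ ^ (i+1))⁻¹) (gammaq q) :=
    (gamma_multipliable hq).hasProd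
  refine ge_of_tendsto hp ?_
  rw [SummationFilter.unconditional_filter, Filter.eventually_atTop]
  refine ⟨s, fun t hst => ?_⟩
  classical
  rw [← Finset.prod_sdiff hst]
  have h1 : (1:ℝ) ≤ ∏ i ∈ t \ s, (1 - (q:ℝ)⁻¹ ^ (i+1))⁻¹ := by
    have := Finset.prod_le_prod (s := t \ s) (f := fun _ => (1:ℝ))
      (g := fun i => (1 - (q:ℝ)⁻¹ ^ (i+1))⁻¹)
      (fun i _ => by norm_num) (fun i _ => gfac_one_le hq i)
    simpa using this
  have h2 : (0:ℝ) ≤ ∏ i ∈ s, (1 - (q:ℝ)⁻¹ ^ (i+1))⁻¹ :=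
    Finset.prod_nonneg fun i _ =>
      le_of_lt (inv_pos.2 (lt_of_lt_of_le (by norm_num) (gfac_pos hq i)))
  nlinarith

lemma gammaq_pos : 0 < gammaq q := by
  have := gamma_partial_le hq ∅
  simp at this
  linarith

lemma gamma_inv_le (s : Finset ℕ) :
    (gammaq q)⁻¹ ≤ ∏ i ∈ s, (1 - (q:ℝ)⁻¹ ^ (i+1)) := by
  have hpos : (0:ℝ) < ∏ i ∈ s, (1 - (q:ℝ)⁻¹ ^ (i+1)) :=
    Finset.prod_pos fun i _ => lt_of_lt_of_le (by norm_num) (gfac_pos hq i)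
  have h := gamma_partial_le hq s
  rw [Finset.prod_inv_distrib] at h
  calc (gammaq q)⁻¹ ≤ ((∏ i ∈ s, (1 - (q:ℝ)⁻¹ ^ (i+1)))⁻¹)⁻¹ := by
        apply inv_anti₀ (by positivity) h
    _ = _ := inv_inv _

end Gamma

lemma prod_qm_sub {q : ℕ} (hq : 2 ≤ q) {w m : ℕ} (hw : w ≤ m) :
    (q:ℝ)^(w*m) * (gammaq q)⁻¹ ≤ ∏ j ∈ Finset.range w, ((q:ℝ)^m - (q:ℝ)^j) := by
  have hq0 : (0:ℝ) < q := by positivity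
  have key : ∀ j ∈ Finset.range w,
      (q:ℝ)^m - (q:ℝ)^j = (q:ℝ)^m * (1 - (q:ℝ)⁻¹^(m-j)) := by
    intro j hj
    have hjm : j ≤ m := le_trans (le_of_lt (Finset.mem_range.1 hj)) hw
    have hqm : (q:ℝ)^m * ((q:ℝ)⁻¹)^(m-j) = (q:ℝ)^j := by
      rw [inv_pow, mul_inv_eq_iff_eq_mul₀ (by positivity), ← pow_add]
      congr 1; omega
    rw [mul_sub, mul_one, hqm]
  rw [Finset.prod_congr rfl key, Finset.prod_mul_distrib, Finset.prod_const,
    Finset.card_range, ← pow_mul]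
  have hre : ∏ j ∈ Finset.range w, (1 - (q:ℝ)⁻¹^(m-j))
      = ∏ i ∈ (Finset.range w).image (fun j => m-1-j), (1 - (q:ℝ)⁻¹^(i+1)) := by
    rw [Finset.prod_image]
    · apply Finset.prod_congr rfl
      intro j hj
      have : j < w := Finset.mem_range.1 hj
      congr 2
      omega
    · intro i hi j hj hij
      have hi' : i < w := Finset.mem_range.1 hi
      have hj' : j < w := Finset.mem_range.1 hj
      simp only at hij
      omega
  have hγ : (gammaq q)⁻¹ ≤ ∏ j ∈ Finset.range w, (1 - (q:ℝ)⁻¹^(m-j)) := by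
    rw [hre]; exact gamma_inv_le hq _
  have hmw : (0:ℝ) ≤ (q:ℝ)^(m*w) := by positivity
  calc (q:ℝ)^(w*m) * (gammaq q)⁻¹ = (q:ℝ)^(m*w) * (gammaq q)⁻¹ := by rw [mul_comm w m]
    _ ≤ (q:ℝ)^(m*w) * ∏ j ∈ Finset.range w, (1 - (q:ℝ)⁻¹^(m-j)) :=
        mul_le_mul_of_nonneg_left hγ hmw
    _ = _ := by ring

section Rank

set_option linter.unusedSectionVars false

variable (Fq : Type) {Fqm : Type} [Field Fq] [Fintype Fq] [Field Fqm] [Fintype Fqm]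
  [Algebra Fq Fqm] {ℓ η : ℕ}

lemma rkw_le_finrank (v : Fin η → Fqm) : rkw Fq v ≤ Module.finrank Fq Fqm :=
  Submodule.finrank_le _

lemma rkw_le_card (v : Fin η → Fqm) : rkw Fq v ≤ η := by
  classical
  haveI : Fintype ↥(Set.range v) := Fintype.ofFinite _
  calc rkw Fq v ≤ (Set.range v).toFinset.card := finrank_span_le_card _
    _ = Fintype.card ↥(Set.range v) := Set.toFinset_card _
    _ ≤ Fintype.card (Fin η) := Fintype.card_range_le v
    _ = η := Fintype.card_fin η

lemma rkw_add_le (u v : Fin η → Fqm) : rkw Fq (u + v) ≤ rkw Fq u + rkw Fq v := by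
  have hle : Submodule.span Fq (Set.range (u + v)) ≤
      Submodule.span Fq (Set.range u) ⊔ Submodule.span Fq (Set.range v) := by
    rw [Submodule.span_le]
    rintro _ ⟨j, rfl⟩
    have hu : u j ∈ Submodule.span Fq (Set.range u) := Submodule.subset_span ⟨j, rfl⟩
    have hv : v j ∈ Submodule.span Fq (Set.range v) := Submodule.subset_span ⟨j, rfl⟩
    exact add_mem (Submodule.mem_sup_left hu) (Submodule.mem_sup_right hv)
  calc rkw Fq (u + v) ≤ Module.finrank Fq
        ↥(Submodule.span Fq (Set.range u) ⊔ Submodule.span Fq (Set.range v)) :=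
        Submodule.finrank_mono hle
    _ ≤ rkw Fq u + rkw Fq v := Submodule.finrank_add_le_finrank_add_finrank _ _

lemma rkw_neg (v : Fin η → Fqm) : rkw Fq (-v) = rkw Fq v := by
  have hspan : Submodule.span Fq (Set.range (-v)) = Submodule.span Fq (Set.range v) := by
    apply le_antisymm <;> rw [Submodule.span_le] <;> rintro _ ⟨j, rfl⟩
    · exact neg_mem (Submodule.subset_span ⟨j, rfl⟩)
    · have : v j = -((-v) j) := by simp
      rw [this]
      exact neg_mem (Submodule.subset_span ⟨j, rfl⟩)
  unfold rkw
  rw [hspan]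

lemma rkw_pos (v : Fin η → Fqm) (hv : v ≠ 0) : 0 < rkw Fq v := by
  obtain ⟨j, hj⟩ := Function.ne_iff.1 hv
  have hmem : v j ∈ Submodule.span Fq (Set.range v) := Submodule.subset_span ⟨j, rfl⟩
  haveI : Nontrivial ↥(Submodule.span Fq (Set.range v)) := by
    refine ⟨⟨⟨v j, hmem⟩, 0, ?_⟩⟩
    simp only [ne_eq, Submodule.mk_eq_zero]
    simpa using hj
  exact Module.finrank_pos

lemma srw_add_le (x y : Fin ℓ → Fin η → Fqm) : srw Fq (x + y) ≤ srw Fq x + srw Fq y := by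
  unfold srw
  rw [← Finset.sum_add_distrib]
  exact Finset.sum_le_sum fun i _ => rkw_add_le Fq (x i) (y i)

lemma srw_neg (x : Fin ℓ → Fin η → Fqm) : srw Fq (-x) = srw Fq x :=
  Finset.sum_congr rfl fun i _ => rkw_neg Fq (x i)

lemma srw_pos (x : Fin ℓ → Fin η → Fqm) (hx : x ≠ 0) : 0 < srw Fq x := by
  obtain ⟨i, hi⟩ := Function.ne_iff.1 hx
  unfold srw
  calc 0 < rkw Fq (x i) := rkw_pos Fq (x i) (by simpa using hi)
    _ ≤ ∑ i, rkw Fq (x i) := Finset.single_le_sum (f := fun i => rkw Fq (x i)) (fun i _ => Nat.zero_le _) (Finset.mem_univ i)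

/-- The vector built from `w` leading entries `a` and `Fq`-combinations of them. -/
noncomputable def blockVec {w : ℕ} (hw : w ≤ η) (a : Fin w → Fqm)
    (M : Fin w → Fin (η - w) → Fq) : Fin η → Fqm :=
  fun j => if h : (j : ℕ) < w then a ⟨j, h⟩
    else ∑ i, M i ⟨(j : ℕ) - w, by have := j.isLt; omega⟩ • a i

lemma blockVec_rkw_le {w : ℕ} (hw : w ≤ η) (a : Fin w → Fqm)
    (M : Fin w → Fin (η - w) → Fq) : rkw Fq (blockVec Fq hw a M) ≤ w := by
  have hle : Submodule.span Fq (Set.range (blockVec Fq hw a M)) ≤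
      Submodule.span Fq (Set.range a) := by
    rw [Submodule.span_le]
    rintro _ ⟨j, rfl⟩
    unfold blockVec
    by_cases h : (j : ℕ) < w
    · rw [dif_pos h]
      exact Submodule.subset_span ⟨_, rfl⟩
    · rw [dif_neg h]
      exact Submodule.sum_mem _ fun i _ =>
        Submodule.smul_mem _ _ (Submodule.subset_span ⟨i, rfl⟩)
  calc rkw Fq (blockVec Fq hw a M) ≤
        Module.finrank Fq ↥(Submodule.span Fq (Set.range a)) := Submodule.finrank_mono hle
    _ ≤ w := rkw_le_card Fq a

lemma blockVec_injective {w : ℕ} (hw : w ≤ η) :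
    Function.Injective (fun p : {a : Fin w → Fqm // LinearIndependent Fq a} ×
      (Fin w → Fin (η - w) → Fq) => blockVec Fq hw p.1.1 p.2) := by
  rintro ⟨⟨a, ha⟩, M⟩ ⟨⟨a', ha'⟩, M'⟩ h
  simp only at h
  have haa : a = a' := by
    funext i
    have hj := congrFun h ⟨(i : ℕ), lt_of_lt_of_le i.isLt hw⟩
    unfold blockVec at hj
    rw [dif_pos i.isLt, dif_pos i.isLt] at hj
    simpa using hj
  subst haa
  have hMM : M = M' := by
    funext i jj
    have hj := congrFun h ⟨w + (jj : ℕ), by have := jj.isLt; omega⟩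
    unfold blockVec at hj
    rw [dif_neg (Nat.not_lt.2 (Nat.le_add_right _ _)), dif_neg (Nat.not_lt.2 (Nat.le_add_right _ _))] at hj
    have hfin : (⟨w + (jj : ℕ) - w, by have := jj.isLt; omega⟩ : Fin (η - w)) = jj := by
      apply Fin.ext; simp
    rw [hfin] at hj
    have hsum : ∑ i', (M i' jj - M' i' jj) • a i' = 0 := by
      rw [Finset.sum_congr rfl fun i' _ => sub_smul (M i' jj) (M' i' jj) (a i'),
        Finset.sum_sub_distrib, hj, sub_self]
    have := Fintype.linearIndependent_iff.1 ha _ hsum i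
    have : M i jj - M' i jj = 0 := this
    have := sub_eq_zero.1 this
    exact this
  subst hMM
  rfl

end Rank

lemma sum_ite_const (ℓ r A B : ℕ) (hr : r ≤ ℓ) :
    ∑ i : Fin ℓ, (if (i:ℕ) < r then A else B) = r * A + (ℓ - r) * B := by
  classical
  rw [Fin.sum_univ_eq_sum_range (fun j => if j < r then A else B) ℓ, Finset.sum_ite]
  have h1 : (Finset.range ℓ).filter (fun j => j < r) = Finset.range r := by
    ext j; simp only [Finset.mem_filter, Finset.mem_range]; omega
  have h2 : (Finset.range ℓ).filter (fun j => ¬ j < r) = Finset.Ico r ℓ := by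
    ext j; simp only [Finset.mem_filter, Finset.mem_range, Finset.mem_Ico]; omega
  rw [h1, h2, Finset.sum_const, Finset.sum_const, Finset.card_range, Nat.card_Ico]
  simp [mul_comm]


/-- Simplified sphere-packing bound in the sum-rank metric. -/
theorem stmt12 (q m ℓ η k d : ℕ) (Fq Fqm : Type) [Field Fq] [Fintype Fq] [Field Fqm]
    [Fintype Fqm] [Algebra Fq Fqm] (hq : Fintype.card Fq = q)
    (hqm : Fintype.card Fqm = q ^ m) (hℓ : 0 < ℓ) (hη : 0 < η) (hm : 0 < m)
    (C : Submodule Fqm (Fin ℓ → Fin η → Fqm)) (hk : Module.finrank Fqm C = k)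
    (hd1 : ∀ c ∈ C, c ≠ 0 → d ≤ srw Fq c)
    (hd2 : ∃ c ∈ C, c ≠ 0 ∧ srw Fq c = d) :
    (q : ℝ) ^ (m * k) *
        (q : ℝ) ^ ((((m : ℝ) + η) - (((d - 1) / 2 : ℕ) : ℝ) / ℓ) * (((d - 1) / 2 : ℕ) : ℝ)
          - (ℓ : ℝ) / 4) * ((gammaq q) ^ ℓ)⁻¹ ≤
      (q : ℝ) ^ (m * (ℓ * η)) := by
  classical
  have hq2 : 2 ≤ q := by
    have h := Fintype.one_lt_card (α := Fq)
    omega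
  have hq1R : (1:ℝ) ≤ (q:ℝ) := by exact_mod_cast (by omega : 1 ≤ q)
  have hq0R : (0:ℝ) < (q:ℝ) := by positivity
  have hγpos : 0 < gammaq q := gammaq_pos hq2
  have hfr : Module.finrank Fq Fqm = m := by
    have h := Module.card_eq_pow_finrank (K := Fq) (V := Fqm)
    rw [hq, hqm] at h
    exact (Nat.pow_right_injective hq2 h.symm)
  set t := (d - 1) / 2 with ht
  obtain ⟨c₀, hc₀C, hc₀ne, hc₀d⟩ := hd2
  have hd_pos : 0 < d := hc₀d ▸ srw_pos Fq c₀ hc₀ne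
  have h2t : 2 * t ≤ d - 1 := by omega
  have hμ1 : 1 ≤ min m η := by omega
  have hdle : d ≤ ℓ * min m η := by
    rw [← hc₀d]
    unfold srw
    calc ∑ i, rkw Fq (c₀ i) ≤ ∑ _i : Fin ℓ, min m η :=
          Finset.sum_le_sum fun i _ =>
            le_min (hfr ▸ rkw_le_finrank Fq (c₀ i)) (rkw_le_card Fq (c₀ i))
      _ = ℓ * min m η := by simp [Finset.sum_const, mul_comm]
  set t0 := t / ℓ with ht0
  set r := t % ℓ with hr
  have htdecomp : ℓ * t0 + r = t := Nat.div_add_mod t ℓ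
  have hrl : r < ℓ := Nat.mod_lt _ hℓ
  set w : Fin ℓ → ℕ := fun i => if (i:ℕ) < r then t0 + 1 else t0 with hwdef
  have ht01 : t0 + 1 ≤ min m η := by
    by_contra hcon
    push_neg at hcon
    have : ℓ * (min m η) ≤ ℓ * t0 := Nat.mul_le_mul_left ℓ (by omega)
    omega
  have hwle : ∀ i, w i ≤ min m η := by
    intro i
    simp only [hwdef]
    split <;> omega
  have hwη : ∀ i, w i ≤ η := fun i => le_trans (hwle i) (min_le_right _ _)
  have hwm : ∀ i, w i ≤ m := fun i => le_trans (hwle i) (min_le_left _ _)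
  have hsumw : ∑ i, w i = t := by
    rw [hwdef]
    rw [sum_ite_const ℓ r (t0+1) t0 hrl.le]
    have h2 : r * t0 ≤ ℓ * t0 := Nat.mul_le_mul_right _ hrl.le
    calc r * (t0+1) + (ℓ - r) * t0 = r * t0 + r + (ℓ * t0 - r * t0) := by
          rw [Nat.mul_succ, Nat.sub_mul]
      _ = r * t0 + r + ℓ * t0 - r * t0 := by rw [Nat.add_sub_assoc h2]
      _ = ℓ * t0 + r := by omega
      _ = t := htdecomp
  -- per-block counting
  have hblockcard : ∀ i : Fin ℓ,
      ((∏ j ∈ Finset.range (w i), (q^m - q^j)) * q^((η - w i)*(w i)) : ℕ) ≤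
        Nat.card {v : Fin η → Fqm // rkw Fq v ≤ w i} := by
    intro i
    have hLI : Nat.card {a : Fin (w i) → Fqm // LinearIndependent Fq a} =
        ∏ j ∈ Finset.range (w i), (q^m - q^j) := by
      rw [card_linearIndependent (K := Fq) (V := Fqm) (by rw [hfr]; exact hwm i), hq, hfr]
      exact Fin.prod_univ_eq_prod_range (fun j => q^m - q^j) (w i)
    have hMcard : Nat.card (Fin (w i) → Fin (η - w i) → Fq) = q^((η - w i)*(w i)) := by
      rw [Nat.card_eq_fintype_card, Fintype.card_fun, Fintype.card_fun, hq,
        Fintype.card_fin, Fintype.card_fin, ← pow_mul]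
    calc (∏ j ∈ Finset.range (w i), (q^m - q^j)) * q^((η - w i)*(w i))
        = Nat.card ({a : Fin (w i) → Fqm // LinearIndependent Fq a} ×
            (Fin (w i) → Fin (η - w i) → Fq)) := by rw [Nat.card_prod, hLI, hMcard]
      _ ≤ Nat.card {v : Fin η → Fqm // rkw Fq v ≤ w i} := by
          apply Nat.card_le_card_of_injective
            (f := fun p : {a : Fin (w i) → Fqm // LinearIndependent Fq a} ×
              (Fin (w i) → Fin (η - w i) → Fq) =>
              (⟨blockVec Fq (hwη i) p.1.1 p.2, blockVec_rkw_le Fq (hwη i) p.1.1 p.2⟩ :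
                {v : Fin η → Fqm // rkw Fq v ≤ w i}))
          intro p p' hpp
          exact blockVec_injective Fq (hwη i) (congrArg Subtype.val hpp)
  -- global product into the ball
  have hprod_le : ∏ i, Nat.card {v : Fin η → Fqm // rkw Fq v ≤ w i} ≤ VolB Fq Fqm ℓ η t := by
    unfold VolB
    rw [← Nat.card_pi]
    apply Nat.card_le_card_of_injective
      (f := fun y : (∀ i, {v : Fin η → Fqm // rkw Fq v ≤ w i}) =>
        (⟨fun i => (y i).1, by
          unfold srw
          calc ∑ i, rkw Fq ((y i).1) ≤ ∑ i, w i := Finset.sum_le_sum fun i _ => (y i).2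
            _ = t := hsumw⟩ : {x : Fin ℓ → Fin η → Fqm // srw Fq x ≤ t}))
    intro y y' hyy
    funext i
    exact Subtype.ext (congrFun (congrArg Subtype.val hyy) i)
  -- sphere packing
  haveI : Fintype ↥C := Fintype.ofFinite _
  have hC : Nat.card ↥C = q^(m*k) := by
    rw [Nat.card_eq_fintype_card, Module.card_eq_pow_finrank (K := Fqm) (V := ↥C), hqm, hk, ← pow_mul]
  have hfull : Nat.card (Fin ℓ → Fin η → Fqm) = q ^ (m * (ℓ*η)) := by
    rw [Nat.card_eq_fintype_card, Fintype.card_fun, Fintype.card_fun, hqm,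
      Fintype.card_fin, Fintype.card_fin, ← pow_mul, ← pow_mul]
    congr 1
    ring
  have hpack : q^(m*k) * VolB Fq Fqm ℓ η t ≤ q^(m*(ℓ*η)) := by
    rw [← hC]
    unfold VolB
    calc Nat.card ↥C * Nat.card {x : Fin ℓ → Fin η → Fqm // srw Fq x ≤ t}
        = Nat.card (↥C × {x : Fin ℓ → Fin η → Fqm // srw Fq x ≤ t}) := (Nat.card_prod _ _).symm
      _ ≤ Nat.card (Fin ℓ → Fin η → Fqm) := by
          apply Nat.card_le_card_of_injective
            (f := fun p : ↥C × {x : Fin ℓ → Fin η → Fqm // srw Fq x ≤ t} =>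
              (p.1 : Fin ℓ → Fin η → Fqm) + p.2.1)
          rintro ⟨c, e⟩ ⟨c', e'⟩ hpe
          simp only at hpe
          have hcc : (c : Fin ℓ → Fin η → Fqm) - (c' : Fin ℓ → Fin η → Fqm) = e'.1 - e.1 := by
            linear_combination hpe
          by_cases hcc0 : (c : Fin ℓ → Fin η → Fqm) - (c' : Fin ℓ → Fin η → Fqm) = 0
          · have hc : (c : Fin ℓ → Fin η → Fqm) = (c' : Fin ℓ → Fin η → Fqm) := by
              rwa [sub_eq_zero] at hcc0
            have he : e.1 = e'.1 := by
              have h2 := hpe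
              rw [hc] at h2
              exact add_left_cancel h2
            rw [Prod.mk.injEq]
            exact ⟨Subtype.ext hc, Subtype.ext he⟩
          · exfalso
            have hge : d ≤ srw Fq ((c : Fin ℓ → Fin η → Fqm) - (c' : Fin ℓ → Fin η → Fqm)) :=
              hd1 _ (sub_mem c.2 c'.2) hcc0
            have hle2 : srw Fq ((c : Fin ℓ → Fin η → Fqm) - (c' : Fin ℓ → Fin η → Fqm)) ≤ 2 * t := by
              rw [hcc, sub_eq_add_neg]
              calc srw Fq (e'.1 + -e.1) ≤ srw Fq e'.1 + srw Fq (-e.1) := srw_add_le Fq _ _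
                _ = srw Fq e'.1 + srw Fq e.1 := by rw [srw_neg]
                _ ≤ t + t := Nat.add_le_add e'.2 e.2
                _ = 2 * t := by ring
            omega
      _ = q ^ (m * (ℓ*η)) := hfull
  -- real: per-block lower bound
  have hNi_real : ∀ i : Fin ℓ,
      (q:ℝ)^((w i)*m) * (gammaq q)⁻¹ * (q:ℝ)^((η - w i)*(w i)) ≤
        (Nat.card {v : Fin η → Fqm // rkw Fq v ≤ w i} : ℝ) := by
    intro i
    have hcast : (((∏ j ∈ Finset.range (w i), (q^m - q^j)) * q^((η - w i)*(w i)) : ℕ) : ℝ)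
        = (∏ j ∈ Finset.range (w i), ((q:ℝ)^m - (q:ℝ)^j)) * (q:ℝ)^((η - w i)*(w i)) := by
      push_cast
      congr 1
      apply Finset.prod_congr rfl
      intro j hj
      have hjm : j ≤ m := le_trans (le_of_lt (Finset.mem_range.1 hj)) (hwm i)
      rw [Nat.cast_sub (Nat.pow_le_pow_right (by omega) hjm)]
      push_cast
      ring
    calc (q:ℝ)^((w i)*m) * (gammaq q)⁻¹ * (q:ℝ)^((η - w i)*(w i))
        ≤ (∏ j ∈ Finset.range (w i), ((q:ℝ)^m - (q:ℝ)^j)) * (q:ℝ)^((η - w i)*(w i)) := by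
          apply mul_le_mul_of_nonneg_right (prod_qm_sub hq2 (hwm i)) (by positivity)
      _ = (((∏ j ∈ Finset.range (w i), (q^m - q^j)) * q^((η - w i)*(w i)) : ℕ) : ℝ) :=
          hcast.symm
      _ ≤ _ := by exact_mod_cast hblockcard i
  -- exponent bookkeeping
  set S : ℕ := ∑ i, ((w i)*m + (η - w i)*(w i)) with hS
  have hSsum : S = r * ((t0+1)*m + (η - (t0+1))*(t0+1)) + (ℓ - r) * (t0*m + (η - t0)*t0) := by
    rw [hS]
    rw [show (fun i : Fin ℓ => (w i)*m + (η - w i)*(w i)) = fun i : Fin ℓ =>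
      if (i:ℕ) < r then (t0+1)*m + (η - (t0+1))*(t0+1) else t0*m + (η - t0)*t0 by
        funext i
        simp only [hwdef]
        split <;> rfl]
    exact sum_ite_const ℓ r _ _ hrl.le
  have hq_prodS : (q:ℝ)^(S) * ((gammaq q)^ℓ)⁻¹ ≤
      ∏ i, (Nat.card {v : Fin η → Fqm // rkw Fq v ≤ w i} : ℝ) := by
    have hlhs : ∏ i : Fin ℓ, ((q:ℝ)^((w i)*m) * (gammaq q)⁻¹ * (q:ℝ)^((η - w i)*(w i)))
        = (q:ℝ)^(S) * ((gammaq q)^ℓ)⁻¹ := by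
      rw [Finset.prod_mul_distrib, Finset.prod_mul_distrib, Finset.prod_const,
        Finset.prod_pow_eq_pow_sum, Finset.prod_pow_eq_pow_sum]
      rw [hS, Finset.sum_add_distrib, pow_add]
      rw [Finset.card_univ, Fintype.card_fin, inv_pow]
      ring
    rw [← hlhs]
    apply Finset.prod_le_prod
    · intro i _
      have : (0:ℝ) < gammaq q := hγpos
      positivity
    · intro i _
      exact hNi_real i
  -- real exponent inequality
  have hexp : ((((m : ℝ) + η) - ((t : ℕ) : ℝ) / ℓ) * ((t : ℕ) : ℝ) - (ℓ : ℝ) / 4) ≤ (S : ℝ) := by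
    have hL0 : (0:ℝ) < (ℓ:ℝ) := by exact_mod_cast hℓ
    have hTcast : ((t:ℕ):ℝ) = (ℓ:ℝ) * (t0:ℝ) + (r:ℝ) := by exact_mod_cast htdecomp.symm
    have hScast : (S:ℝ) = (r:ℝ) * (((t0:ℝ)+1)*(m:ℝ) + ((η:ℝ) - ((t0:ℝ)+1))*((t0:ℝ)+1))
        + ((ℓ:ℝ) - (r:ℝ)) * ((t0:ℝ)*(m:ℝ) + ((η:ℝ) - (t0:ℝ))*(t0:ℝ)) := by
      rw [hSsum]
      have h1 : t0 + 1 ≤ η := le_trans ht01 (min_le_right _ _)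
      have h2 : t0 ≤ η := by omega
      push_cast [Nat.cast_sub hrl.le, Nat.cast_sub h1, Nat.cast_sub h2]
      ring
    set L := (ℓ:ℝ); set R := (r:ℝ); set T0 := (t0:ℝ); set T := ((t:ℕ):ℝ)
    have hSval : (S:ℝ) = ((m:ℝ) + (η:ℝ)) * T - (L*T0^2 + 2*R*T0 + R) := by
      rw [hScast, hTcast]; ring
    have hkey : (L*T0^2 + 2*R*T0 + R) * L ≤ T^2 + L^2/4 := by
      rw [hTcast]
      nlinarith [sq_nonneg (2*R - L), sq_nonneg T0, hL0.le]
    have hdiv : L*T0^2 + 2*R*T0 + R ≤ T^2/L + L/4 := by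
      rw [show T^2/L + L/4 = (T^2 + L^2/4)/L by field_simp, le_div_iff₀ hL0]
      exact hkey
    have hTT : (((m:ℝ) + η) - T/L) * T = ((m:ℝ) + η) * T - T^2/L := by ring
    rw [hTT, hSval]
    linarith
  -- final assembly
  have hstep : (q:ℝ) ^ ((((m : ℝ) + η) - (((d - 1) / 2 : ℕ) : ℝ) / ℓ) * (((d - 1) / 2 : ℕ) : ℝ)
      - (ℓ : ℝ) / 4) * ((gammaq q) ^ ℓ)⁻¹ ≤ ((VolB Fq Fqm ℓ η t : ℕ) : ℝ) := by
    have h1 : (q:ℝ) ^ ((((m : ℝ) + η) - (((d - 1) / 2 : ℕ) : ℝ) / ℓ) * (((d - 1) / 2 : ℕ) : ℝ)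
        - (ℓ : ℝ) / 4) ≤ (q:ℝ)^(S:ℕ) := by
      rw [← Real.rpow_natCast (q:ℝ) S]
      exact Real.rpow_le_rpow_of_exponent_le hq1R hexp
    calc (q:ℝ) ^ ((((m : ℝ) + η) - (((d - 1) / 2 : ℕ) : ℝ) / ℓ) * (((d - 1) / 2 : ℕ) : ℝ)
        - (ℓ : ℝ) / 4) * ((gammaq q) ^ ℓ)⁻¹ ≤ (q:ℝ)^(S:ℕ) * ((gammaq q) ^ ℓ)⁻¹ := by
          apply mul_le_mul_of_nonneg_right h1 (by positivity)
      _ ≤ ∏ i, (Nat.card {v : Fin η → Fqm // rkw Fq v ≤ w i} : ℝ) := hq_prodS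
      _ = ((∏ i, Nat.card {v : Fin η → Fqm // rkw Fq v ≤ w i} : ℕ) : ℝ) := by push_cast; rfl
      _ ≤ _ := by exact_mod_cast hprod_le
  rw [mul_assoc]
  calc (q:ℝ)^(m*k) * ((q:ℝ) ^ ((((m : ℝ) + η) - (((d - 1) / 2 : ℕ) : ℝ) / ℓ) *
        (((d - 1) / 2 : ℕ) : ℝ) - (ℓ : ℝ) / 4) * ((gammaq q) ^ ℓ)⁻¹)
      ≤ (q:ℝ)^(m*k) * ((VolB Fq Fqm ℓ η t : ℕ) : ℝ) :=
        mul_le_mul_of_nonneg_left hstep (by positivity)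
    _ ≤ (q:ℝ)^(m*(ℓ*η)) := by exact_mod_cast hpack
end

section
/- (Singleton bound in the sum-rank metric) For any 𝔽_{q^m}-linear [n,k,d] sum-rank-metric code, k ≤ min{ n - d + 1, (η/m)(ℓm - d + 1) }. -/
open Module Submodule Finset


section Lemmas
variable {Fq Fqm : Type} [Field Fq] [Field Fqm] [Algebra Fq Fqm]


lemma rkw_le_of_subset {η : ℕ} (v : Fin η → Fqm) (J : Finset (Fin η))
    (h : ∀ j ∉ J, v j = 0) : rkw Fq v ≤ J.card := by
  classical
  have h2 : span Fq (Set.range v) ≤ span Fq ((J.image v : Finset Fqm) : Set Fqm) := by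
    rw [span_le]
    rintro _ ⟨j, rfl⟩
    by_cases hj : j ∈ J
    · exact subset_span (by simpa using Finset.mem_image_of_mem v hj)
    · rw [h j hj]; exact zero_mem _
  calc rkw Fq v ≤ finrank Fq (span Fq ((J.image v : Finset Fqm) : Set Fqm)) :=
        Submodule.finrank_mono h2
    _ ≤ (J.image v).card := finrank_span_finset_le_card _
    _ ≤ J.card := Finset.card_image_le

lemma rkw_eq_zero {η : ℕ} {v : Fin η → Fqm} (h : rkw Fq v = 0) : v = 0 := by
  have : FiniteDimensional Fq (span Fq (Set.range v)) := FiniteDimensional.span_of_finite Fq (Set.finite_range v)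
  have hb : span Fq (Set.range v) = ⊥ := Submodule.finrank_eq_zero.mp h
  funext j
  have : v j ∈ (⊥ : Submodule Fq Fqm) := hb ▸ subset_span ⟨j, rfl⟩
  simpa using this

lemma rkw_rows {η m : ℕ} (B : Basis (Fin m) Fq Fqm) (v : Fin η → Fqm) (R : Finset (Fin m))
    (h : ∀ k, ∀ j ∉ R, B.repr (v k) j = 0) : rkw Fq v ≤ R.card := by
  classical
  have h2 : span Fq (Set.range v) ≤ span Fq ((R.image B : Finset Fqm) : Set Fqm) := by
    rw [span_le]
    rintro _ ⟨k, rfl⟩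
    have hv : v k = ∑ j ∈ R, B.repr (v k) j • B j := by
      rw [Finset.sum_subset (Finset.subset_univ R)]
      · exact (B.sum_repr (v k)).symm
      · intro j _ hj; rw [h k j hj, zero_smul]
    rw [hv]
    exact Submodule.sum_mem _ fun j hj =>
      Submodule.smul_mem _ _ (subset_span (by simpa using Finset.mem_image_of_mem B hj))
  calc rkw Fq v ≤ finrank Fq (span Fq ((R.image B : Finset Fqm) : Set Fqm)) :=
        Submodule.finrank_mono h2
    _ ≤ (R.image B).card := finrank_span_finset_le_card _
    _ ≤ R.card := Finset.card_image_le

lemma fiber_sum {ℓ α : Type*} [Fintype ℓ] [DecidableEq ℓ] [DecidableEq α]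
    (T : Finset (ℓ × α)) : ∑ i, (T.filter (fun p => p.1 = i)).card = T.card :=
  (Finset.card_eq_sum_card_fiberwise (fun p _ => Finset.mem_univ p.1)).symm

lemma srw_le_of_subset {ℓ η : ℕ} (x : Fin ℓ → Fin η → Fqm) (T : Finset (Fin ℓ × Fin η))
    (h : ∀ p ∉ T, x p.1 p.2 = 0) : srw Fq x ≤ T.card := by
  classical
  calc srw Fq x ≤ ∑ i, (T.filter (fun p => p.1 = i)).card := by
        refine Finset.sum_le_sum fun i _ => ?_
        refine le_trans (rkw_le_of_subset (x i)
          ((T.filter (fun p => p.1 = i)).image Prod.snd) fun j hj => ?_) Finset.card_image_le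
        exact h (i, j) fun hT => hj (Finset.mem_image.mpr
          ⟨(i, j), Finset.mem_filter.mpr ⟨hT, rfl⟩, rfl⟩)
    _ = T.card := fiber_sum T

lemma srw_rows {ℓ η m : ℕ} (B : Basis (Fin m) Fq Fqm) (x : Fin ℓ → Fin η → Fqm)
    (T : Finset (Fin ℓ × Fin m))
    (h : ∀ p ∉ T, ∀ kk : Fin η, B.repr (x p.1 kk) p.2 = 0) : srw Fq x ≤ T.card := by
  classical
  calc srw Fq x ≤ ∑ i, (T.filter (fun p => p.1 = i)).card := by
        refine Finset.sum_le_sum fun i _ => ?_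
        refine le_trans (rkw_rows B (x i)
          ((T.filter (fun p => p.1 = i)).image Prod.snd) fun kk j hj => ?_) Finset.card_image_le
        exact h (i, j) (fun hT => hj (Finset.mem_image.mpr
          ⟨(i, j), Finset.mem_filter.mpr ⟨hT, rfl⟩, rfl⟩)) kk
    _ = T.card := fiber_sum T

end Lemmas

/-- Singleton bound in the sum-rank metric. -/
theorem stmt15 (q m ℓ η k d : ℕ) (Fq Fqm : Type) [Field Fq] [Fintype Fq] [Field Fqm]
    [Fintype Fqm] [Algebra Fq Fqm] (hq : Fintype.card Fq = q)
    (hqm : Fintype.card Fqm = q ^ m) (hℓ : 0 < ℓ) (hη : 0 < η) (hm : 0 < m)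
    (C : Submodule Fqm (Fin ℓ → Fin η → Fqm)) (hk : Module.finrank Fqm C = k)
    (hd1 : ∀ c ∈ C, c ≠ 0 → d ≤ srw Fq c)
    (hd2 : ∃ c ∈ C, c ≠ 0 ∧ srw Fq c = d) :
    (k : ℝ) ≤ min ((ℓ * η : ℕ) - (d : ℝ) + 1)
      ((η : ℝ) / m * ((ℓ * m : ℕ) - (d : ℝ) + 1)) := by
  classical
  have hq2 : 1 < q := hq ▸ Fintype.one_lt_card
  have hfr : Module.finrank Fq Fqm = m := by
    have h := card_eq_pow_finrank (K := Fq) (V := Fqm)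
    rw [hq, hqm] at h
    exact (Nat.pow_right_injective hq2 h.symm)
  obtain ⟨c0, hc0C, hc0ne, hc0d⟩ := hd2
  -- d ≥ 1
  have hd_pos : 1 ≤ d := by
    rcases Nat.eq_zero_or_pos d with h0 | h
    · exfalso
      apply hc0ne
      rw [h0] at hc0d
      have hz : ∀ i ∈ Finset.univ, rkw Fq (c0 i) = 0 :=
        (Finset.sum_eq_zero_iff).mp hc0d
      funext i j
      simpa using congrFun (rkw_eq_zero (hz i (Finset.mem_univ i))) j
    · exact h
  -- d ≤ ℓ * η
  have hdle1 : d ≤ ℓ * η := by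
    rw [← hc0d]
    calc srw Fq c0 ≤ ∑ _i : Fin ℓ, η := by
          refine Finset.sum_le_sum fun i _ => ?_
          simpa using rkw_le_of_subset (c0 i) Finset.univ (by simp)
      _ = ℓ * η := by simp [Finset.sum_const, Finset.card_univ, mul_comm]
  -- d ≤ ℓ * m
  have hdle2 : d ≤ ℓ * m := by
    rw [← hc0d]
    calc srw Fq c0 ≤ ∑ _i : Fin ℓ, m := by
          refine Finset.sum_le_sum fun i _ => ?_
          simpa [hfr, rkw] using (Submodule.finrank_le (span Fq (Set.range (c0 i))) : rkw Fq (c0 i) ≤ _)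
      _ = ℓ * m := by simp [Finset.sum_const, Finset.card_univ, mul_comm]
  -- Bound 1
  obtain ⟨T, -, hTcard⟩ := Finset.exists_subset_card_eq (show d - 1 ≤ (Finset.univ : Finset (Fin ℓ × Fin η)).card
    by simpa using le_trans (Nat.sub_le d 1) hdle1)
  let φ : C →ₗ[Fqm] ({ p // p ∈ Tᶜ } → Fqm) :=
    { toFun := fun c s => c.1 s.1.1 s.1.2
      map_add' := fun a b => rfl
      map_smul' := fun r a => rfl }
  have hφinj : Function.Injective φ := by
    rw [← LinearMap.ker_eq_bot, LinearMap.ker_eq_bot']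
    intro c hc
    by_contra hne
    have hcne : (c : Fin ℓ → Fin η → Fqm) ≠ 0 := fun h => hne (Subtype.ext h)
    have hle : srw Fq (c : Fin ℓ → Fin η → Fqm) ≤ T.card := by
      refine srw_le_of_subset _ T fun p hp => ?_
      have : φ c ⟨p, Finset.mem_compl.mpr hp⟩ = 0 := congrFun hc _
      exact this
    have := hd1 c c.2 hcne
    omega
  have h1 : k ≤ ℓ * η - (d - 1) := by
    have hb := LinearMap.finrank_le_finrank_of_injective hφinj
    rw [hk, Module.finrank_pi, Fintype.card_coe, Finset.card_compl, hTcard] at hb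
    simpa using hb
  -- Bound 2
  let B : Basis (Fin m) Fq Fqm := Module.finBasisOfFinrankEq Fq Fqm hfr
  obtain ⟨T2, -, hT2card⟩ := Finset.exists_subset_card_eq (show d - 1 ≤ (Finset.univ : Finset (Fin ℓ × Fin m)).card
    by simpa using le_trans (Nat.sub_le d 1) hdle2)
  let ψ : C →ₗ[Fq] ({ p // p ∈ T2ᶜ } → Fin η → Fq) :=
    { toFun := fun c s kk => B.repr (c.1 s.1.1 kk) s.1.2
      map_add' := by
        intro a b
        funext s kk
        simp [Submodule.coe_add]
      map_smul' := by
        intro r a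
        funext s kk
        simp [Submodule.coe_smul_of_tower] }
  have hψinj : Function.Injective ψ := by
    rw [← LinearMap.ker_eq_bot, LinearMap.ker_eq_bot']
    intro c hc
    by_contra hne
    have hcne : (c : Fin ℓ → Fin η → Fqm) ≠ 0 := fun h => hne (Subtype.ext h)
    have hle : srw Fq (c : Fin ℓ → Fin η → Fqm) ≤ T2.card := by
      refine srw_rows B _ T2 fun p hp kk => ?_
      have : ψ c ⟨p, Finset.mem_compl.mpr hp⟩ kk = 0 := congrFun (congrFun hc _) kk
      exact this
    have := hd1 c c.2 hcne
    omega
  have h2 : m * k ≤ (ℓ * m - (d - 1)) * η := by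
    have hb := LinearMap.finrank_le_finrank_of_injective hψinj
    have hCfr : Module.finrank Fq C = m * k := by
      rw [← hfr, ← hk]
      exact (Module.finrank_mul_finrank Fq Fqm C).symm
    rw [hCfr, Module.finrank_pi_fintype] at hb
    simp only [Module.finrank_pi, Fintype.card_fin, Finset.sum_const, Finset.card_univ,
      Fintype.card_coe, smul_eq_mul] at hb
    have hcc : (T2ᶜ).card = ℓ * m - (d - 1) := by
      rw [Finset.card_compl, hT2card]
      simp [Fintype.card_prod]
    rw [hcc] at hb
    exact hb
  -- conclude
  apply le_min
  · have h : k + (d - 1) ≤ ℓ * η := by omega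
    have hc := (Nat.cast_le (α := ℝ)).mpr h
    push_cast [Nat.cast_sub hd_pos] at hc ⊢
    linarith
  · have hnat : m * k + (d - 1) * η ≤ ℓ * m * η := by
      have : (d - 1) ≤ ℓ * m := by omega
      have := Nat.add_le_add_right h2 ((d - 1) * η)
      rw [← Nat.add_mul, Nat.sub_add_cancel ‹d - 1 ≤ ℓ * m›] at this
      simpa using this
    have hcast : (m : ℝ) * k + ((d : ℝ) - 1) * η ≤ (ℓ : ℝ) * m * η := by
      have := (Nat.cast_le (α := ℝ)).mpr hnat
      push_cast [Nat.cast_sub hd_pos] at this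
      linarith
    rw [div_mul_eq_mul_div, le_div_iff₀ (by exact_mod_cast hm : (0:ℝ) < (m:ℝ))]
    push_cast
    nlinarith [hcast]
end

section
/- The cardinality of the set U_{ℓ,t} of block-diagonal matrices U = U_1 ⊕ ... ⊕ U_ℓ where each U_i ∈ 𝔽_q^{t_i×η} is a full-rank matrix in reduced row echelon form and ∑ t_i = t, equals ∑_{(t_1,...,t_ℓ)} ∏_{i=1}^ℓ [η choose t_i]_q, and is at most C(t+ℓ-1, ℓ-1) · q^{t(η - t/ℓ)} · γ_q^ℓ. -/
/-- The set of ordered tuples `(t_1,...,t_ℓ)` of nonnegative integers with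
`t_1 + ... + t_ℓ = t` and each `t_i ≤ μ`. -/
def tuples (ℓ t μ : ℕ) : Finset (Fin ℓ → ℕ) :=
  (Fintype.piFinset fun _ => Finset.range (μ + 1)).filter fun f => ∑ i, f i = t

/-- A (full-row-rank) matrix is in reduced row echelon form: there are strictly
increasing pivot columns, pivot entries are `1`, entries to the left of a pivot are `0`,
and pivot columns have zeros in all other rows. -/
def IsRREF {F : Type} [Field F] {a b : ℕ} (M : Matrix (Fin a) (Fin b) F) : Prop :=
  ∃ p : Fin a → Fin b, StrictMono p ∧ (∀ i, M i (p i) = 1) ∧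
    (∀ (i : Fin a) (j : Fin b), (j : ℕ) < (p i : ℕ) → M i j = 0) ∧
    (∀ i i', i' ≠ i → M i' (p i) = 0)

/-- The Gaussian (`q`-)binomial coefficient `[n choose t]_q`, defined as the number of
`t`-dimensional subspaces of `F^n`. -/
noncomputable def qBinom (F : Type) [Field F] (n t : ℕ) : ℕ :=
  Nat.card {W : Submodule F (Fin n → F) // Module.finrank F W = t}

/-- The cardinality of the set `U_{ℓ,t}` of block-diagonal matrices
`U = U_1 ⊕ ... ⊕ U_ℓ` with `U_i ∈ Fq^{t_i × η}` full-row-rank matrices in reduced row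
echelon form, `∑ t_i = t`, `t_i ≤ μ`. -/
noncomputable def cardU (Fq : Type) [Field Fq] (ℓ η μ t : ℕ) : ℕ :=
  Nat.card ((f : {f : Fin ℓ → ℕ // f ∈ tuples ℓ t μ}) ×
    {U : (i : Fin ℓ) → Matrix (Fin (f.1 i)) (Fin η) Fq //
      ∀ i, (U i).rank = f.1 i ∧ IsRREF (U i)})


open Finset

section RREF
variable {F : Type} [Field F] {k η : ℕ}

lemma rref_repr {M : Matrix (Fin k) (Fin η) F} {p : Fin k → Fin η}
    (h1 : ∀ i, M i (p i) = 1) (hcol : ∀ i i', i' ≠ i → M i' (p i) = 0)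
    {v : Fin η → F} (hv : v ∈ Submodule.span F (Set.range M)) :
    v = ∑ j, v (p j) • M j := by
  obtain ⟨c, hc⟩ := (Submodule.mem_span_range_iff_exists_fun F).mp hv
  have hcj : ∀ j, v (p j) = c j := by
    intro j
    rw [← hc, Finset.sum_apply]
    rw [Finset.sum_eq_single j]
    · simp [h1 j]
    · intro i _ hij
      simp [hcol j i hij]
    · simp
  rw [show (fun j => v (p j) • M j) = fun j => c j • M j from funext fun j => by rw [hcj]]
  exact hc.symm

lemma rref_pivot_le {M M' : Matrix (Fin k) (Fin η) F} {p p' : Fin k → Fin η}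
    (hmono : StrictMono p) (h1 : ∀ i, M i (p i) = 1)
    (hleft : ∀ (i : Fin k) (j : Fin η), (j : ℕ) < (p i : ℕ) → M i j = 0)
    (hcol : ∀ i i', i' ≠ i → M i' (p i) = 0)
    (h1' : ∀ i, M' i (p' i) = 1)
    (hcol' : ∀ i i', i' ≠ i → M' i' (p' i) = 0)
    (hspan : ∀ i, M' i ∈ Submodule.span F (Set.range M))
    (i : Fin k) (hlow : ∀ j, j < i → p j = p' j) : ¬ p' i < p i := by
  intro hlt
  have hrow := rref_repr h1 hcol (hspan i)
  have key : M' i (p' i) = ∑ j, M' i (p j) * M j (p' i) := by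
    conv_lhs => rw [hrow]
    rw [Finset.sum_apply]
    simp [smul_eq_mul]
  rw [h1' i] at key
  have hz : ∀ j ∈ Finset.univ, M' i (p j) * M j (p' i) = 0 := by
    intro j _
    rcases lt_or_ge j i with hj | hj
    · rw [hlow j hj, hcol' j i (ne_of_gt hj), zero_mul]
    · have hlt2 : ((p' i : ℕ)) < ((p j : ℕ)) := lt_of_lt_of_le hlt (hmono.monotone hj)
      rw [hleft j _ hlt2, mul_zero]
  rw [Finset.sum_eq_zero hz] at key
  exact one_ne_zero key

lemma rref_unique {M M' : Matrix (Fin k) (Fin η) F}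
    (hM : IsRREF M) (hM' : IsRREF M')
    (hspan : Submodule.span F (Set.range M) = Submodule.span F (Set.range M')) :
    M = M' := by
  obtain ⟨p, hmono, h1, hleft, hcol⟩ := hM
  obtain ⟨p', hmono', h1', hleft', hcol'⟩ := hM'
  have hmem : ∀ i, M' i ∈ Submodule.span F (Set.range M) := fun i =>
    hspan ▸ Submodule.subset_span ⟨i, rfl⟩
  have hmem' : ∀ i, M i ∈ Submodule.span F (Set.range M') := fun i =>
    hspan ▸ Submodule.subset_span ⟨i, rfl⟩
  have hp : ∀ n : ℕ, ∀ i : Fin k, (i : ℕ) = n → p i = p' i := by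
    intro n
    induction n using Nat.strong_induction_on with
    | _ n ih =>
      intro i hi
      have hlow : ∀ j, j < i → p j = p' j := fun j hj => ih j (hi ▸ hj) j rfl
      have hlow' : ∀ j, j < i → p' j = p j := fun j hj => (hlow j hj).symm
      have A := rref_pivot_le hmono h1 hleft hcol h1' hcol' hmem i hlow
      have B := rref_pivot_le hmono' h1' hleft' hcol' h1 hcol hmem' i hlow'
      exact le_antisymm (not_lt.mp A) (not_lt.mp B)
  have hpe : ∀ i, p i = p' i := fun i => hp i i rfl
  funext i
  have hrow := rref_repr h1 hcol (hmem i)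
  have hterm : ∀ jj : Fin k, M' i (p jj) • M jj = (if jj = i then M jj else 0) := by
    intro jj
    rcases eq_or_ne jj i with h | h
    · subst h; rw [hpe, h1', one_smul, if_pos rfl]
    · rw [hpe, hcol' jj i (Ne.symm h), zero_smul, if_neg h]
  calc M i = ∑ jj, (if jj = i then M jj else 0) :=
              ((Finset.sum_ite_eq' Finset.univ i (fun jj => (M jj : Fin η → F))).trans
                (if_pos (Finset.mem_univ i))).symm
    _ = ∑ jj, M' i (p jj) • M jj := by rw [Finset.sum_congr rfl fun jj _ => (hterm jj)]
    _ = M' i := hrow.symm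

end RREF
section Exists
variable {F : Type} [Field F] {k η : ℕ}

lemma lead_exists (v : Fin η → F) (hv : v ≠ 0) :
    ∃ j0 : Fin η, v j0 ≠ 0 ∧ ∀ j', j' < j0 → v j' = 0 := by
  classical
  have hne : (univ.filter (fun j => v j ≠ 0)).Nonempty := by
    rcases Function.ne_iff.mp hv with ⟨j, hj⟩
    exact ⟨j, Finset.mem_filter.mpr ⟨Finset.mem_univ _, by simpa using hj⟩⟩
  refine ⟨(univ.filter (fun j => v j ≠ 0)).min' hne, ?_, ?_⟩
  · have := Finset.min'_mem _ hne; simpa using this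
  · intro j' hj'
    by_contra h
    exact absurd (Finset.min'_le _ j' (by simp [h])) (not_le.mpr hj')

lemma rref_exists (W : Submodule F (Fin η → F)) (hW : Module.finrank F W = k) :
    ∃ M : Matrix (Fin k) (Fin η) F, M.rank = k ∧ IsRREF M ∧
      Submodule.span F (Set.range M) = W := by
  classical
  set P : Finset (Fin η) :=
    univ.filter (fun j => ∃ w ∈ W, w j ≠ 0 ∧ ∀ j' < j, w j' = 0) with hP
  have hzero : ∀ w ∈ W, (∀ j ∈ P, w j = 0) → w = 0 := by
    intro w hw h0
    by_contra hne
    obtain ⟨j0, hj0, hmin⟩ := lead_exists w hne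
    exact hj0 (h0 j0 (Finset.mem_filter.mpr ⟨mem_univ _, ⟨w, hw, hj0, hmin⟩⟩))
  set φ : W →ₗ[F] (↥P → F) :=
    LinearMap.pi (fun j => (LinearMap.proj (j : Fin η)).comp W.subtype) with hφ
  have hker : LinearMap.ker φ = ⊥ := by
    rw [LinearMap.ker_eq_bot']
    intro w hw0
    have : (w : Fin η → F) = 0 := by
      apply hzero _ w.2
      intro j hj
      have := congrFun hw0 ⟨j, hj⟩
      simpa [hφ] using this
    exact Subtype.ext this
  have hφinj : Function.Injective φ := LinearMap.ker_eq_bot.mp hker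
  have hle1 : k ≤ P.card := by
    have := LinearMap.finrank_le_finrank_of_injective hφinj
    rwa [hW, Module.finrank_pi, Fintype.card_coe] at this
  have hwit : ∀ j : ↥P, ∃ w, w ∈ W ∧ w (j : Fin η) ≠ 0 ∧ ∀ j' < (j : Fin η), w j' = 0 := by
    intro j
    obtain ⟨-, w, hw, h1, h2⟩ := Finset.mem_filter.mp j.2
    exact ⟨w, hw, h1, h2⟩
  choose g hg1 hg2 hg3 using hwit
  have hgind : LinearIndependent F (fun j : ↥P => (⟨g j, hg1 j⟩ : W)) := by
    rw [Fintype.linearIndependent_iff]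
    intro c hc
    by_contra hne
    push_neg at hne
    obtain ⟨i0, hi0⟩ := hne
    have hSne : (univ.filter fun j : ↥P => c j ≠ 0).Nonempty := ⟨i0, by simp [hi0]⟩
    set j0 := (univ.filter fun j : ↥P => c j ≠ 0).min' hSne with hj0
    have hj0mem : c j0 ≠ 0 := by
      have := Finset.min'_mem _ hSne; rw [← hj0] at this; exact (Finset.mem_filter.mp this).2
    have hval := congrArg (fun w : W => (w : Fin η → F) (j0 : Fin η)) hc
    simp only [Submodule.coe_sum, Submodule.coe_smul, Finset.sum_apply, Pi.smul_apply,
      smul_eq_mul, ZeroMemClass.coe_zero, Pi.zero_apply] at hval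
    rw [Finset.sum_eq_single j0] at hval
    · exact hj0mem (by
        rcases mul_eq_zero.mp hval with h | h
        · exact h
        · exact absurd h (hg2 j0))
    · intro j _ hjne
      rcases eq_or_ne (c j) 0 with h | h
      · rw [h, zero_mul]
      · have hjS : j ∈ univ.filter fun j : ↥P => c j ≠ 0 := by simp [h]
        have hlt : j0 < j := lt_of_le_of_ne (Finset.min'_le _ _ hjS) (Ne.symm hjne)
        rw [hg3 j _ (by exact_mod_cast hlt), mul_zero]
    · simp
  have hle2 : P.card ≤ k := by
    have := hgind.fintype_card_le_finrank
    rwa [Fintype.card_coe, hW] at this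
  have hcard : P.card = k := le_antisymm hle2 hle1
  have hφbij : Function.Bijective φ :=
    ⟨hφinj, (LinearMap.injective_iff_surjective_of_finrank_eq_finrank
      (by rw [hW, Module.finrank_pi, Fintype.card_coe, hcard])).mp hφinj⟩
  set e := LinearEquiv.ofBijective φ hφbij with he
  set oi := P.orderIsoOfFin hcard with hoi
  set r : Fin k → W := fun i => e.symm (Pi.single (M := fun _ => F) (oi i) 1) with hr'
  have hr : ∀ i (j : ↥P), (r i : Fin η → F) (j : Fin η) = Pi.single (M := fun _ => F) (oi i) 1 j := by
    intro i j
    have h2 : φ (r i) = Pi.single (M := fun _ => F) (oi i) 1 := e.apply_symm_apply _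
    exact congrFun h2 j
  set M : Matrix (Fin k) (Fin η) F := fun i j => (r i : Fin η → F) j with hM
  set p : Fin k → Fin η := fun i => (oi i : Fin η) with hp'
  have heval : ∀ i i', M i (p i') = if oi i' = oi i then 1 else 0 := by
    intro i i'
    have h2 : M i (p i') = Pi.single (M := fun _ => F) (oi i) 1 (oi i') := hr i (oi i')
    rw [h2, Pi.single_apply]
  have h1 : ∀ i, M i (p i) = 1 := fun i => by rw [heval, if_pos rfl]
  have hcol : ∀ i i', i' ≠ i → M i' (p i) = 0 := by
    intro i i' hne
    rw [heval]
    exact if_neg (fun h => hne (oi.injective h).symm)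
  have hmono : StrictMono p := fun a b h => Subtype.coe_lt_coe.mpr (oi.strictMono h)
  have hleft : ∀ (i : Fin k) (j : Fin η), (j : ℕ) < (p i : ℕ) → M i j = 0 := by
    intro i j hj
    have hvne : (r i : Fin η → F) ≠ 0 := by
      intro h
      have := h1 i
      rw [hM] at this
      simp only [h, Pi.zero_apply] at this
      exact one_ne_zero this.symm
    obtain ⟨j0, hj0ne, hj0min⟩ := lead_exists _ hvne
    have hj0P : j0 ∈ P :=
      Finset.mem_filter.mpr ⟨mem_univ _, ⟨(r i : Fin η → F), (r i).2, hj0ne, hj0min⟩⟩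
    have hj0eq : (⟨j0, hj0P⟩ : ↥P) = oi i := by
      by_contra hne
      apply hj0ne
      have := hr i ⟨j0, hj0P⟩
      rwa [Pi.single_apply, if_neg hne] at this
    have hpj : p i = j0 := by
      rw [hp']
      exact congrArg Subtype.val hj0eq.symm
    exact hj0min j (by rw [hpj] at hj; exact hj)
  have hind : LinearIndependent F M := by
    rw [Fintype.linearIndependent_iff]
    intro c hc i
    have hcv := congrFun hc (p i)
    rw [Finset.sum_apply] at hcv
    simp only [Pi.smul_apply, smul_eq_mul, Pi.zero_apply] at hcv
    rw [Finset.sum_eq_single i] at hcv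
    · change c i * M i (p i) = 0 at hcv
      rwa [h1, mul_one] at hcv
    · intro j _ hjne
      change c j * M j (p i) = 0
      rw [hcol i j hjne, mul_zero]
    · simp
  have hspan : Submodule.span F (Set.range M) = W := by
    apply Submodule.eq_of_le_of_finrank_le
    · rw [Submodule.span_le]
      rintro _ ⟨i, rfl⟩
      exact (r i).2
    · rw [hW, finrank_span_eq_card hind, Fintype.card_fin]
  have hrank : M.rank = k := by
    rw [Matrix.rank_eq_finrank_span_row, Matrix.row, hspan, hW]
  exact ⟨M, hrank, ⟨p, hmono, h1, hleft, hcol⟩, hspan⟩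

end Exists
section Card

lemma nat_card_sigma {ι : Type*} [Fintype ι] (β : ι → Type*) [∀ i, Finite (β i)] :
    Nat.card (Σ i, β i) = ∑ i, Nat.card (β i) := by
  letI := fun i => Fintype.ofFinite (β i)
  simp only [Nat.card_eq_fintype_card, Fintype.card_sigma]

variable {F : Type} [Field F] {η : ℕ}

lemma card_rref (k : ℕ) :
    Nat.card {M : Matrix (Fin k) (Fin η) F // M.rank = k ∧ IsRREF M} = qBinom F η k := by
  apply Nat.card_congr
  refine Equiv.ofBijective
    (fun M => ⟨Submodule.span F (Set.range (M.1 : Fin k → Fin η → F)), ?_⟩) ⟨?_, ?_⟩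
  · exact (Matrix.rank_eq_finrank_span_row M.1).symm.trans M.2.1
  · rintro ⟨M, hM⟩ ⟨M', hM'⟩ h
    simp only [Subtype.mk.injEq] at h ⊢
    exact rref_unique hM.2 hM'.2 (congrArg Subtype.val h)
  · rintro ⟨W, hWf⟩
    obtain ⟨M, hr1, hr2, hr3⟩ := rref_exists W hWf
    exact ⟨⟨M, hr1, hr2⟩, Subtype.ext hr3⟩

lemma qBinom_mul (Fq : Type) [Field Fq] [Fintype Fq] (η k : ℕ) (hk : k ≤ η) :
    qBinom Fq η k * ∏ i ∈ Finset.range k, (Fintype.card Fq ^ k - Fintype.card Fq ^ i) =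
      ∏ i ∈ Finset.range k, (Fintype.card Fq ^ η - Fintype.card Fq ^ i) := by
  classical
  have hfr : Module.finrank Fq (Fin η → Fq) = η := by
    rw [Module.finrank_pi, Fintype.card_fin]
  have hA : Nat.card {s : Fin k → (Fin η → Fq) // LinearIndependent Fq s} =
      ∏ i ∈ Finset.range k, (Fintype.card Fq ^ η - Fintype.card Fq ^ i) := by
    have h := card_linearIndependent (K := Fq) (V := Fin η → Fq) (k := k)
      (by rw [hfr]; exact hk)
    rw [h, hfr, ← Fin.prod_univ_eq_prod_range]
  set T := {W : Submodule Fq (Fin η → Fq) // Module.finrank Fq W = k} with hT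
  letI : Fintype T := Fintype.ofFinite T
  set fmap : {s : Fin k → (Fin η → Fq) // LinearIndependent Fq s} → T := fun s =>
    ⟨Submodule.span Fq (Set.range s.1), by
      rw [finrank_span_eq_card s.2, Fintype.card_fin]⟩ with hfmap
  have hsig : Nat.card {s : Fin k → (Fin η → Fq) // LinearIndependent Fq s} =
      ∑ W : T, Nat.card {s // fmap s = W} := by
    rw [← nat_card_sigma]
    exact Nat.card_congr (Equiv.sigmaFiberEquiv fmap).symm
  have hfib : ∀ W : T, Nat.card {s // fmap s = W} =
      ∏ i ∈ Finset.range k, (Fintype.card Fq ^ k - Fintype.card Fq ^ i) := by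
    intro W
    have heq : {s // fmap s = W} ≃ {s : Fin k → ↥W.1 // LinearIndependent Fq s} := by
      refine ⟨fun s => ⟨fun i => ⟨s.1.1 i, ?_⟩, ?_⟩, fun s => ⟨⟨fun i => (s.1 i : Fin η → Fq),
        s.2.map' W.1.subtype (Submodule.ker_subtype _)⟩, ?_⟩, ?_, ?_⟩
      · have hsp : Submodule.span Fq (Set.range s.1.1) = W.1 := congrArg Subtype.val s.2
        rw [← hsp]
        exact Submodule.subset_span ⟨i, rfl⟩
      · exact LinearIndependent.of_comp W.1.subtype s.1.2
      · apply Subtype.ext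
        have hind2 : LinearIndependent Fq (fun i : Fin k => (s.1 i : Fin η → Fq)) :=
          s.2.map' W.1.subtype (Submodule.ker_subtype _)
        show Submodule.span Fq (Set.range (fun i : Fin k => (s.1 i : Fin η → Fq))) = W.1
        apply Submodule.eq_of_le_of_finrank_le
        · rw [Submodule.span_le]
          rintro _ ⟨i, rfl⟩
          exact (s.1 i).2
        · rw [W.2, finrank_span_eq_card hind2, Fintype.card_fin]
      · intro s
        exact Subtype.ext (Subtype.ext rfl)
      · intro s
        exact Subtype.ext (funext fun i => Subtype.ext rfl)
    rw [Nat.card_congr heq]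
    haveI : Finite ↥W.1 := Subtype.finite
    have h := card_linearIndependent (K := Fq) (V := ↥W.1) (k := k) (by rw [W.2])
    rw [h, W.2, ← Fin.prod_univ_eq_prod_range]
  rw [← hA, hsig, Finset.sum_congr rfl (fun W _ => hfib W), Finset.sum_const,
    Finset.card_univ, smul_eq_mul, qBinom, ← hT, Nat.card_eq_fintype_card]

end Card
section Gamma

variable {q : ℕ} (hq : 2 ≤ q)

lemma x_facts (hq : 2 ≤ q) : 0 ≤ (q : ℝ)⁻¹ ∧ (q : ℝ)⁻¹ ≤ 1 / 2 := by
  have h2 : (2 : ℝ) ≤ q := by exact_mod_cast hq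
  constructor
  · positivity
  · rw [one_div]
    exact inv_anti₀ (by norm_num) h2

lemma y_facts (hq : 2 ≤ q) (n : ℕ) :
    0 ≤ (q : ℝ)⁻¹ ^ (n + 1) ∧ (q : ℝ)⁻¹ ^ (n + 1) ≤ 1 / 2 := by
  obtain ⟨h0, h12⟩ := x_facts hq
  refine ⟨by positivity, ?_⟩
  calc (q : ℝ)⁻¹ ^ (n + 1) ≤ (q : ℝ)⁻¹ ^ 1 :=
        pow_le_pow_of_le_one h0 (le_trans h12 (by norm_num)) (by omega)
    _ = (q : ℝ)⁻¹ := pow_one _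
    _ ≤ 1 / 2 := h12

lemma f_pos (hq : 2 ≤ q) (n : ℕ) : 0 < (1 - (q : ℝ)⁻¹ ^ (n + 1))⁻¹ := by
  obtain ⟨h0, h12⟩ := y_facts hq n
  have : 0 < 1 - (q : ℝ)⁻¹ ^ (n + 1) := by linarith
  positivity

lemma f_one_le (hq : 2 ≤ q) (n : ℕ) : 1 ≤ (1 - (q : ℝ)⁻¹ ^ (n + 1))⁻¹ := by
  obtain ⟨h0, h12⟩ := y_facts hq n
  rw [le_inv_comm₀ one_pos (by linarith)]
  linarith

lemma gamma_log_summable (hq : 2 ≤ q) :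
    Summable (fun n : ℕ => Real.log ((1 - (q : ℝ)⁻¹ ^ (n + 1))⁻¹)) := by
  have hbound : Summable (fun n : ℕ => 2 * ((q : ℝ)⁻¹ * (q : ℝ)⁻¹ ^ n)) := by
    obtain ⟨hx0, hx12⟩ := x_facts hq
    exact Summable.mul_left 2 ((summable_geometric_of_lt_one hx0
      (by linarith)).mul_left (q : ℝ)⁻¹)
  refine Summable.of_nonneg_of_le
    (fun n => Real.log_nonneg (f_one_le hq n)) (fun n => ?_) hbound
  obtain ⟨h0, h12⟩ := y_facts hq n
  have h1y : (0 : ℝ) < 1 - (q : ℝ)⁻¹ ^ (n + 1) := by linarith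
  have hle : (1 - (q : ℝ)⁻¹ ^ (n + 1))⁻¹ ≤ 1 + 2 * (q : ℝ)⁻¹ ^ (n + 1) := by
    rw [inv_le_iff_one_le_mul₀ h1y]
    nlinarith
  calc Real.log ((1 - (q : ℝ)⁻¹ ^ (n + 1))⁻¹)
      ≤ (1 - (q : ℝ)⁻¹ ^ (n + 1))⁻¹ - 1 := Real.log_le_sub_one_of_pos (f_pos hq n)
    _ ≤ 2 * (q : ℝ)⁻¹ ^ (n + 1) := by linarith
    _ = 2 * ((q : ℝ)⁻¹ * (q : ℝ)⁻¹ ^ n) := by rw [pow_succ']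

lemma gamma_eq_exp (hq : 2 ≤ q) :
    gammaq q = Real.exp (∑' n : ℕ, Real.log ((1 - (q : ℝ)⁻¹ ^ (n + 1))⁻¹)) := by
  have h := Real.rexp_tsum_eq_tprod (fun n => f_pos hq n) (gamma_log_summable hq)
  rw [gammaq, h]

lemma partial_le_gamma (hq : 2 ≤ q) (k : ℕ) :
    ∏ j ∈ Finset.range k, (1 - (q : ℝ)⁻¹ ^ (j + 1))⁻¹ ≤ gammaq q := by
  rw [gamma_eq_exp hq]
  have h1 : ∏ j ∈ Finset.range k, (1 - (q : ℝ)⁻¹ ^ (j + 1))⁻¹ =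
      Real.exp (∑ j ∈ Finset.range k, Real.log ((1 - (q : ℝ)⁻¹ ^ (j + 1))⁻¹)) := by
    rw [Real.exp_sum]
    exact Finset.prod_congr rfl fun j _ => (Real.exp_log (f_pos hq j)).symm
  rw [h1, Real.exp_le_exp]
  exact Summable.sum_le_tsum (Finset.range k) (fun i _ => Real.log_nonneg (f_one_le hq i))
    (gamma_log_summable hq)

lemma one_le_gamma (hq : 2 ≤ q) : 1 ≤ gammaq q := by
  simpa using partial_le_gamma hq 0

end Gamma
section QBound

lemma qBinom_le (Fq : Type) [Field Fq] [Fintype Fq] {η k : ℕ} (hk : k ≤ η) :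
    (qBinom Fq η k : ℝ) ≤ (Fintype.card Fq : ℝ) ^ (k * (η - k)) *
      gammaq (Fintype.card Fq) := by
  set q := Fintype.card Fq with hql
  have hq2 : 2 ≤ q := Fintype.one_lt_card
  have hq0 : (0 : ℝ) < q := by
    have : (2 : ℝ) ≤ q := by exact_mod_cast hq2
    linarith
  have hq1 : (1 : ℝ) < q := by
    have : (2 : ℝ) ≤ q := by exact_mod_cast hq2
    linarith
  have hID := qBinom_mul Fq η k hk
  have c1 : ((∏ i ∈ Finset.range k, (q ^ k - q ^ i) : ℕ) : ℝ) =
      ∏ i ∈ Finset.range k, ((q : ℝ) ^ k - (q : ℝ) ^ i) := by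
    rw [Nat.cast_prod]
    refine Finset.prod_congr rfl fun i hi => ?_
    rw [Nat.cast_sub (Nat.pow_le_pow_right (by omega) (Finset.mem_range.mp hi).le)]
    push_cast
    ring
  have c2 : ((∏ i ∈ Finset.range k, (q ^ η - q ^ i) : ℕ) : ℝ) =
      ∏ i ∈ Finset.range k, ((q : ℝ) ^ η - (q : ℝ) ^ i) := by
    rw [Nat.cast_prod]
    refine Finset.prod_congr rfl fun i hi => ?_
    rw [Nat.cast_sub (Nat.pow_le_pow_right (by omega)
      (le_trans (Finset.mem_range.mp hi).le hk))]
    push_cast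
    ring
  have hcast : (qBinom Fq η k : ℝ) * ∏ i ∈ Finset.range k, ((q : ℝ) ^ k - (q : ℝ) ^ i) =
      ∏ i ∈ Finset.range k, ((q : ℝ) ^ η - (q : ℝ) ^ i) := by
    rw [← c1, ← c2, ← Nat.cast_mul, hID]
  have hD : 0 < ∏ i ∈ Finset.range k, ((q : ℝ) ^ k - (q : ℝ) ^ i) := by
    refine Finset.prod_pos fun i hi => sub_pos.mpr ?_
    have : q ^ i < q ^ k := Nat.pow_lt_pow_right (by omega) (Finset.mem_range.mp hi)
    exact_mod_cast this
  set G := ∏ j ∈ Finset.range k, (1 - (q : ℝ)⁻¹ ^ (j + 1))⁻¹ with hG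
  have hyfact : ∀ i ∈ Finset.range k, 0 ≤ (q : ℝ)⁻¹ ^ (k - i) ∧
      (q : ℝ)⁻¹ ^ (k - i) ≤ 1 / 2 := by
    intro i hi
    have h1 : k - i - 1 + 1 = k - i := by
      have := Finset.mem_range.mp hi; omega
    have := y_facts hq2 (k - i - 1)
    rwa [h1] at this
  have key : ∀ i ∈ Finset.range k, (q : ℝ) ^ η - (q : ℝ) ^ i ≤
      ((q : ℝ) ^ (η - k) * (1 - (q : ℝ)⁻¹ ^ (k - i))⁻¹) * ((q : ℝ) ^ k - (q : ℝ) ^ i) := by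
    intro i hi
    obtain ⟨hy0, hy12⟩ := hyfact i hi
    have h1y : (0 : ℝ) < 1 - (q : ℝ)⁻¹ ^ (k - i) := by linarith
    have hik := Finset.mem_range.mp hi
    have h2 : (q : ℝ) ^ k * ((q : ℝ) ^ (k - i))⁻¹ = (q : ℝ) ^ i := by
      rw [eq_comm, eq_mul_inv_iff_mul_eq₀ (by positivity), ← pow_add]
      congr 1
      omega
    have e1 : ((q : ℝ) ^ k - (q : ℝ) ^ i) = (q : ℝ) ^ k * (1 - (q : ℝ)⁻¹ ^ (k - i)) := by
      rw [mul_sub, mul_one, inv_pow, h2]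
    have e2 : ((q : ℝ) ^ (η - k) * (1 - (q : ℝ)⁻¹ ^ (k - i))⁻¹) *
        ((q : ℝ) ^ k - (q : ℝ) ^ i) = (q : ℝ) ^ η := by
      rw [e1, show ((q : ℝ) ^ (η - k) * (1 - (q : ℝ)⁻¹ ^ (k - i))⁻¹) *
          ((q : ℝ) ^ k * (1 - (q : ℝ)⁻¹ ^ (k - i))) =
          ((q : ℝ) ^ (η - k) * (q : ℝ) ^ k) *
          ((1 - (q : ℝ)⁻¹ ^ (k - i))⁻¹ * (1 - (q : ℝ)⁻¹ ^ (k - i))) from by ring,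
        inv_mul_cancel₀ (ne_of_gt h1y), mul_one, ← pow_add]
      congr 1
      omega
    rw [e2]
    have : (0 : ℝ) ≤ (q : ℝ) ^ i := by positivity
    linarith
  have step1 : ∏ i ∈ Finset.range k, ((q : ℝ) ^ η - (q : ℝ) ^ i) ≤
      ∏ i ∈ Finset.range k, (((q : ℝ) ^ (η - k) * (1 - (q : ℝ)⁻¹ ^ (k - i))⁻¹) *
        ((q : ℝ) ^ k - (q : ℝ) ^ i)) := by
    refine Finset.prod_le_prod (fun i hi => ?_) key
    have : (q : ℝ) ^ i ≤ (q : ℝ) ^ η :=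
      pow_le_pow_right₀ (le_of_lt hq1) (le_trans (Finset.mem_range.mp hi).le hk)
    linarith
  have step2 : ∏ i ∈ Finset.range k, (((q : ℝ) ^ (η - k) * (1 - (q : ℝ)⁻¹ ^ (k - i))⁻¹) *
      ((q : ℝ) ^ k - (q : ℝ) ^ i)) =
      ((q : ℝ) ^ (k * (η - k)) * G) * ∏ i ∈ Finset.range k, ((q : ℝ) ^ k - (q : ℝ) ^ i) := by
    rw [Finset.prod_mul_distrib, Finset.prod_mul_distrib]
    congr 1
    congr 1
    · rw [Finset.prod_const, ← pow_mul, Finset.card_range, mul_comm]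
    · rw [hG, ← Finset.prod_range_reflect]
      refine Finset.prod_congr rfl fun j hj => ?_
      have hjk := Finset.mem_range.mp hj
      have he : k - (k - 1 - j) = j + 1 := by omega
      rw [he]
  have hfinal : (qBinom Fq η k : ℝ) ≤ (q : ℝ) ^ (k * (η - k)) * G := by
    refine le_of_mul_le_mul_right ?_ hD
    rw [hcast]
    exact le_trans step1 (le_of_eq step2)
  refine le_trans hfinal ?_
  exact mul_le_mul_of_nonneg_left (partial_le_gamma hq2 k) (by positivity)

end QBound
lemma mem_tuples {ℓ t μ : ℕ} {f : Fin ℓ → ℕ} :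
    f ∈ tuples ℓ t μ ↔ (∀ i, f i ≤ μ) ∧ ∑ i, f i = t := by
  simp [tuples, Fintype.mem_piFinset, Nat.lt_succ_iff]

lemma tuples_card_le (ℓ t μ : ℕ) (hℓ : 0 < ℓ) :
    (tuples ℓ t μ).card ≤ (t + ℓ - 1).choose (ℓ - 1) := by
  classical
  have hcard_sum : ∀ (s : Finset (Fin ℓ)) (g : Fin ℓ → Multiset (Fin ℓ)),
      Multiset.card (∑ i ∈ s, g i) = ∑ i ∈ s, Multiset.card (g i) := by
    intro s g
    induction s using Finset.cons_induction with
    | empty => simp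
    | cons a s ha ih => simp [Finset.sum_cons, ih]
  have hcardm : ∀ f : Fin ℓ → ℕ,
      (∑ i, f i • ({i} : Multiset (Fin ℓ))).card = ∑ i, f i := by
    intro f
    rw [hcard_sum]
    exact Finset.sum_congr rfl fun i _ => by
      rw [Multiset.card_nsmul, Multiset.card_singleton, mul_one]
  have hcount : ∀ (f : Fin ℓ → ℕ) (j : Fin ℓ),
      Multiset.count j (∑ i, f i • ({i} : Multiset (Fin ℓ))) = f j := by
    intro f j
    rw [Multiset.count_sum']
    simp only [Multiset.count_nsmul, Multiset.count_singleton, mul_ite, mul_one, mul_zero]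
    rw [Finset.sum_ite_eq]
    simp
  set Φ : (Fin ℓ → ℕ) → Sym (Fin ℓ) t := fun f =>
    if h : (∑ i, f i • ({i} : Multiset (Fin ℓ))).card = t then ⟨_, h⟩
    else Sym.replicate t ⟨0, hℓ⟩ with hΦ
  have h1 : (tuples ℓ t μ).card ≤ Fintype.card (Sym (Fin ℓ) t) := by
    rw [← Finset.card_univ]
    apply Finset.card_le_card_of_injOn Φ (fun f _ => Finset.mem_univ _)
    intro f hf g hg hfg
    have hfc : (∑ i, f i • ({i} : Multiset (Fin ℓ))).card = t := by
      rw [hcardm]; exact (mem_tuples.mp hf).2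
    have hgc : (∑ i, g i • ({i} : Multiset (Fin ℓ))).card = t := by
      rw [hcardm]; exact (mem_tuples.mp hg).2
    rw [hΦ] at hfg
    simp only [dif_pos hfc, dif_pos hgc] at hfg
    have hms : (∑ i, f i • ({i} : Multiset (Fin ℓ))) = ∑ i, g i • ({i} : Multiset (Fin ℓ)) :=
      by simpa [hfc, hgc] using congrArg Subtype.val hfg
    funext j
    rw [← hcount f j, ← hcount g j, hms]
  refine le_trans h1 ?_
  rw [Sym.card_sym_eq_choose, Fintype.card_fin]
  have he : ℓ + t - 1 = t + ℓ - 1 := by omega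
  rw [he]
  have h2 : (t + ℓ - 1).choose (t + ℓ - 1 - t) = (t + ℓ - 1).choose t :=
    Nat.choose_symm (by omega)
  have h3 : t + ℓ - 1 - t = ℓ - 1 := by omega
  rw [← h2, h3]

theorem stmt17 (q m η ℓ t : ℕ) (Fq : Type) [Field Fq] [Fintype Fq]
    (hq : Fintype.card Fq = q) (hη : 0 < η) (hℓ : 0 < ℓ) (ht : 0 < t) (hm : 0 < m) :
    cardU Fq ℓ η (min m η) t = ∑ f ∈ tuples ℓ t (min m η), ∏ i, qBinom Fq η (f i) ∧
      (cardU Fq ℓ η (min m η) t : ℝ) ≤ (Nat.choose (t + ℓ - 1) (ℓ - 1) : ℝ) *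
        (q : ℝ) ^ ((t : ℝ) * ((η : ℝ) - (t : ℝ) / ℓ)) * (gammaq q) ^ ℓ := by
  classical
  set μ := min m η with hμ
  have hμη : μ ≤ η := min_le_right m η
  have part1 : cardU Fq ℓ η μ t = ∑ f ∈ tuples ℓ t μ, ∏ i, qBinom Fq η (f i) := by
    rw [cardU, nat_card_sigma]
    rw [← Finset.sum_coe_sort (tuples ℓ t μ) (fun f => ∏ i, qBinom Fq η (f i))]
    refine Finset.sum_congr rfl fun f _ => ?_
    have e : {U : (i : Fin ℓ) → Matrix (Fin (f.1 i)) (Fin η) Fq //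
        ∀ i, (U i).rank = f.1 i ∧ IsRREF (U i)} ≃
        ∀ i : Fin ℓ, {M : Matrix (Fin (f.1 i)) (Fin η) Fq // M.rank = f.1 i ∧ IsRREF M} :=
      Equiv.subtypePiEquivPi (β := fun i => Matrix (Fin (f.1 i)) (Fin η) Fq)
        (p := fun i M => M.rank = f.1 i ∧ IsRREF M)
    rw [Nat.card_congr e, Nat.card_pi]
    exact Finset.prod_congr rfl fun i _ => card_rref (f.1 i)
  refine ⟨part1, ?_⟩
  have hq2 : 2 ≤ q := hq ▸ Fintype.one_lt_card
  have hγ1 : 1 ≤ gammaq q := one_le_gamma hq2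
  have hγ0 : 0 ≤ gammaq q := le_trans zero_le_one hγ1
  have hq1R : (1 : ℝ) ≤ q := by exact_mod_cast le_trans (by norm_num : (1:ℕ) ≤ 2) hq2
  have hl0 : (0 : ℝ) < ℓ := by exact_mod_cast hℓ
  rw [part1]
  push_cast
  have hsummand : ∀ f ∈ tuples ℓ t μ, (∏ i, (qBinom Fq η (f i) : ℝ)) ≤
      (q : ℝ) ^ ((t : ℝ) * ((η : ℝ) - (t : ℝ) / ℓ)) * gammaq q ^ ℓ := by
    intro f hf
    obtain ⟨hfle, hfsum⟩ := mem_tuples.mp hf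
    have hfη : ∀ i, f i ≤ η := fun i => le_trans (hfle i) hμη
    have h1 : ∀ i, (qBinom Fq η (f i) : ℝ) ≤ (q : ℝ) ^ (f i * (η - f i)) * gammaq q := by
      intro i
      have := qBinom_le Fq (η := η) (k := f i) (hfη i)
      rwa [hq] at this
    calc ∏ i, (qBinom Fq η (f i) : ℝ)
        ≤ ∏ i, ((q : ℝ) ^ (f i * (η - f i)) * gammaq q) :=
          Finset.prod_le_prod (fun i _ => by positivity) (fun i _ => h1 i)
      _ = (∏ i, (q : ℝ) ^ (f i * (η - f i))) * gammaq q ^ ℓ := by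
          rw [Finset.prod_mul_distrib, Finset.prod_const, Finset.card_univ, Fintype.card_fin]
      _ = (q : ℝ) ^ (∑ i, f i * (η - f i)) * gammaq q ^ ℓ := by
          rw [Finset.prod_pow_eq_pow_sum]
      _ ≤ (q : ℝ) ^ ((t : ℝ) * ((η : ℝ) - (t : ℝ) / ℓ)) * gammaq q ^ ℓ := by
          refine mul_le_mul_of_nonneg_right ?_ (by positivity)
          rw [← Real.rpow_natCast (q : ℝ) (∑ i, f i * (η - f i))]
          apply Real.rpow_le_rpow_of_exponent_le hq1R
          have hterm : ∀ i : Fin ℓ, ((f i * (η - f i) : ℕ) : ℝ) =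
              (f i : ℝ) * η - (f i : ℝ) ^ 2 := by
            intro i
            rw [Nat.cast_mul, Nat.cast_sub (hfη i)]
            ring
          have hc : ((∑ i, f i * (η - f i) : ℕ) : ℝ) =
              (t : ℝ) * η - ∑ i, (f i : ℝ) ^ 2 := by
            rw [Nat.cast_sum, Finset.sum_congr rfl fun i _ => hterm i,
              Finset.sum_sub_distrib, ← Finset.sum_mul, ← Nat.cast_sum, hfsum]
          rw [hc]
          have hcheb : (t : ℝ) ^ 2 ≤ (ℓ : ℝ) * ∑ i, (f i : ℝ) ^ 2 := by
            have h := sq_sum_le_card_mul_sum_sq (s := (Finset.univ : Finset (Fin ℓ)))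
              (f := fun i => (f i : ℝ))
            rw [Finset.card_univ, Fintype.card_fin, ← Nat.cast_sum, hfsum] at h
            exact_mod_cast h
          have h2 : (t : ℝ) ^ 2 / ℓ ≤ ∑ i, (f i : ℝ) ^ 2 := by
            rw [div_le_iff₀ hl0]
            linarith [hcheb]
          have h3 : (t : ℝ) * ((η : ℝ) - (t : ℝ) / ℓ) = t * η - t ^ 2 / ℓ := by ring
          linarith
  calc ∑ f ∈ tuples ℓ t μ, ∏ i, (qBinom Fq η (f i) : ℝ)
      ≤ ∑ _f ∈ tuples ℓ t μ, ((q : ℝ) ^ ((t : ℝ) * ((η : ℝ) - (t : ℝ) / ℓ)) * gammaq q ^ ℓ) :=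
        Finset.sum_le_sum hsummand
    _ = ((tuples ℓ t μ).card : ℝ) * ((q : ℝ) ^ ((t : ℝ) * ((η : ℝ) - (t : ℝ) / ℓ)) *
        gammaq q ^ ℓ) := by rw [Finset.sum_const, nsmul_eq_mul]
    _ ≤ ((t + ℓ - 1).choose (ℓ - 1) : ℝ) * ((q : ℝ) ^ ((t : ℝ) * ((η : ℝ) - (t : ℝ) / ℓ)) *
        gammaq q ^ ℓ) := by
        refine mul_le_mul_of_nonneg_right ?_ (by positivity)
        exact_mod_cast tuples_card_le ℓ t μ hℓ
    _ = ((t + ℓ - 1).choose (ℓ - 1) : ℝ) * (q : ℝ) ^ ((t : ℝ) * ((η : ℝ) - (t : ℝ) / ℓ)) *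
        gammaq q ^ ℓ := by ring
end
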